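/- Let N ≥ 1, c ∈ ℝ and a ∈ ℝ^N with |a| < 1. Then for every continuously differentiable function u : ℝ^{N+1}_+ → ℂ whose full gradient ∇u lies in L²_c, one has |Im 𝔞(u,u)| ≤ (|a|/(1−|a|)) Re 𝔞(u,u), where 𝔞(u,u) = ∫_{ℝ^{N+1}_+} |∇u|² y^c dx dy + 2∫_{ℝ^{N+1}_+} (D_y u)(a·∇_x ū) y^c dx dy. In particular the form 𝔞 is sectorial. -/

import Mathlib

open MeasureTheory Real

noncomputable section

/-- The upper half-space `ℝ^{N+1}_+`. -/
def HS (N : ℕ) : Set ((Fin N → ℝ) × ℝ) := {z | 0 < z.2}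

/-- Partial derivative of `u` in the `i`-th `x` direction. -/
def pXc {N : ℕ} (u : ((Fin N → ℝ) × ℝ) → ℂ) (i : Fin N) (z : (Fin N → ℝ) × ℝ) : ℂ :=
  fderiv ℝ u z (Pi.single i 1, 0)

/-- Partial derivative of `u` in the `y` direction. -/
def pYc {N : ℕ} (u : ((Fin N → ℝ) × ℝ) → ℂ) (z : (Fin N → ℝ) × ℝ) : ℂ :=
  fderiv ℝ u z (0, 1)

/-- Squared Euclidean norm of the full gradient `∇u`. -/
def gradSqC {N : ℕ} (u : ((Fin N → ℝ) × ℝ) → ℂ) (z : (Fin N → ℝ) × ℝ) : ℝ :=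
  (∑ i, ‖pXc u i z‖ ^ 2) + ‖pYc u z‖ ^ 2

/-- The sesquilinear form
`𝔞(u,v) = ∫ ⟨∇u, ∇v̄⟩ y^c + 2 ∫ (D_y u)(a·∇_x v̄) y^c` on the half-space. -/
def aForm (N : ℕ) (c : ℝ) (a : Fin N → ℝ) (u v : ((Fin N → ℝ) × ℝ) → ℂ) : ℂ :=
  (∫ z in HS N, ((∑ i, pXc u i z * (starRingEnd ℂ) (pXc v i z)) +
      pYc u z * (starRingEnd ℂ) (pYc v z)) * ((z.2 ^ c : ℝ) : ℂ)) +
  2 * ∫ z in HS N, (pYc u z * ∑ i, (a i : ℂ) * (starRingEnd ℂ) (pXc v i z)) *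
      ((z.2 ^ c : ℝ) : ℂ)

section Aux

variable {N : ℕ} {c : ℝ} {a : Fin N → ℝ} {u : ((Fin N → ℝ) × ℝ) → ℂ}

/-- The first integrand is the real function `gradSqC u * y^c`. -/
lemma aux_I1 :
    (∫ z in HS N, ((∑ i, pXc u i z * (starRingEnd ℂ) (pXc u i z)) +
      pYc u z * (starRingEnd ℂ) (pYc u z)) * ((z.2 ^ c : ℝ) : ℂ))
    = ((∫ z in HS N, gradSqC u z * z.2 ^ c : ℝ) : ℂ) := by
  refine Eq.trans (integral_congr_ae (.of_forall fun z => ?_)) integral_ofReal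
  rw [gradSqC]
  push_cast
  simp only [Complex.mul_conj, Complex.normSq_eq_norm_sq]
  push_cast
  ring_nf
  rfl

/-- Cauchy–Schwarz bound for the sum `a · ∇ₓū`. -/
lemma aux_CS (z : (Fin N → ℝ) × ℝ) :
    ‖∑ i, (a i : ℂ) * (starRingEnd ℂ) (pXc u i z)‖
      ≤ Real.sqrt (∑ i, a i ^ 2) * Real.sqrt (∑ i, ‖pXc u i z‖ ^ 2) := by
  calc ‖∑ i, (a i : ℂ) * (starRingEnd ℂ) (pXc u i z)‖
      ≤ ∑ i, ‖(a i : ℂ) * (starRingEnd ℂ) (pXc u i z)‖ := norm_sum_le _ _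
    _ = ∑ i, |a i| * ‖pXc u i z‖ := by
        simp [norm_mul, Complex.norm_real, Real.norm_eq_abs]
    _ ≤ Real.sqrt (∑ i, |a i| ^ 2) * Real.sqrt (∑ i, ‖pXc u i z‖ ^ 2) :=
        Real.sum_mul_le_sqrt_mul_sqrt _ _ _
    _ = Real.sqrt (∑ i, a i ^ 2) * Real.sqrt (∑ i, ‖pXc u i z‖ ^ 2) := by
        simp [sq_abs]

set_option maxHeartbeats 1000000 in
/-- Pointwise bound for the second integrand. -/
lemma aux_ptb {z : (Fin N → ℝ) × ℝ} (hz : z ∈ HS N) :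
    ‖(pYc u z * ∑ i, (a i : ℂ) * (starRingEnd ℂ) (pXc u i z)) * ((z.2 ^ c : ℝ) : ℂ)‖
      ≤ Real.sqrt (∑ i, a i ^ 2) / 2 * (gradSqC u z * z.2 ^ c) := by
  have hs0 : 0 ≤ Real.sqrt (∑ i, a i ^ 2) := Real.sqrt_nonneg _
  have hz' : (0:ℝ) < z.2 := hz
  have hyc : (0:ℝ) ≤ z.2 ^ c := Real.rpow_nonneg hz'.le c
  have htn : (0:ℝ) ≤ ∑ i, ‖pXc u i z‖ ^ 2 :=
    Finset.sum_nonneg fun i _ => sq_nonneg _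
  have ht2 : (Real.sqrt (∑ i, ‖pXc u i z‖ ^ 2)) ^ 2 = ∑ i, ‖pXc u i z‖ ^ 2 :=
    Real.sq_sqrt htn
  have h1 : ‖pYc u z * ∑ i, (a i : ℂ) * (starRingEnd ℂ) (pXc u i z)‖
      ≤ Real.sqrt (∑ i, a i ^ 2) / 2 * gradSqC u z := by
    calc ‖pYc u z * ∑ i, (a i : ℂ) * (starRingEnd ℂ) (pXc u i z)‖
        = ‖pYc u z‖ * ‖∑ i, (a i : ℂ) * (starRingEnd ℂ) (pXc u i z)‖ := norm_mul _ _
      _ ≤ ‖pYc u z‖ * (Real.sqrt (∑ i, a i ^ 2) * Real.sqrt (∑ i, ‖pXc u i z‖ ^ 2)) :=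
          mul_le_mul_of_nonneg_left (aux_CS z) (norm_nonneg _)
      _ ≤ Real.sqrt (∑ i, a i ^ 2) / 2 * gradSqC u z := by
          rw [gradSqC]
          nlinarith [mul_nonneg hs0
            (sq_nonneg (‖pYc u z‖ - Real.sqrt (∑ i, ‖pXc u i z‖ ^ 2)))]
  calc ‖(pYc u z * ∑ i, (a i : ℂ) * (starRingEnd ℂ) (pXc u i z)) * ((z.2 ^ c : ℝ) : ℂ)‖
      = ‖pYc u z * ∑ i, (a i : ℂ) * (starRingEnd ℂ) (pXc u i z)‖ * (z.2 ^ c) := by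
        rw [norm_mul, Complex.norm_real, Real.norm_eq_abs, abs_of_nonneg hyc]
    _ ≤ Real.sqrt (∑ i, a i ^ 2) / 2 * gradSqC u z * z.2 ^ c :=
          mul_le_mul_of_nonneg_right h1 hyc
    _ = Real.sqrt (∑ i, a i ^ 2) / 2 * (gradSqC u z * z.2 ^ c) := by ring

/-- Norm bound for the second integral. -/
lemma aux_J (hu : ContDiff ℝ 1 u)
    (hgrad : Integrable (fun z => gradSqC u z * z.2 ^ c) (volume.restrict (HS N))) :
    ‖∫ z in HS N, (pYc u z * ∑ i, (a i : ℂ) * (starRingEnd ℂ) (pXc u i z)) *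
        ((z.2 ^ c : ℝ) : ℂ)‖
      ≤ Real.sqrt (∑ i, a i ^ 2) / 2 * ∫ z in HS N, gradSqC u z * z.2 ^ c := by
  have hmeas : MeasurableSet (HS N) :=
    measurableSet_lt measurable_const measurable_snd
  rw [← integral_const_mul]
  refine norm_integral_le_of_norm_le (hgrad.const_mul _) ?_
  filter_upwards [ae_restrict_mem hmeas] with z hz using aux_ptb hz

/-- Nonnegativity of `A`. -/
lemma aux_A0 : (0:ℝ) ≤ ∫ z in HS N, gradSqC u z * z.2 ^ c := by
  have hmeas : MeasurableSet (HS N) :=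
    measurableSet_lt measurable_const measurable_snd
  refine setIntegral_nonneg hmeas fun z hz => ?_
  have hz' : (0:ℝ) < z.2 := hz
  have h1 : (0:ℝ) ≤ gradSqC u z := by
    rw [gradSqC]; positivity
  exact mul_nonneg h1 (Real.rpow_nonneg hz'.le c)

end Aux

/-- if `|a| < 1`, then for every `C¹` function `u` whose full gradient
lies in `L²_c`, one has `|Im 𝔞(u,u)| ≤ (|a|/(1−|a|)) Re 𝔞(u,u)`; in particular the
form `𝔞` is sectorial. -/
theorem stmt_1 (N : ℕ) (hN : 1 ≤ N) (c : ℝ) (a : Fin N → ℝ)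
    (ha : Real.sqrt (∑ i, a i ^ 2) < 1)
    (u : ((Fin N → ℝ) × ℝ) → ℂ) (hu : ContDiff ℝ 1 u)
    (hgrad : Integrable (fun z => gradSqC u z * z.2 ^ c) (volume.restrict (HS N))) :
    |(aForm N c a u u).im| ≤
      (Real.sqrt (∑ i, a i ^ 2) / (1 - Real.sqrt (∑ i, a i ^ 2))) * (aForm N c a u u).re := by
  obtain ⟨A, hAdef⟩ : ∃ A : ℝ, A = ∫ z in HS N, gradSqC u z * z.2 ^ c := ⟨_, rfl⟩
  obtain ⟨J, hJdef⟩ : ∃ J : ℂ, J = ∫ z in HS N,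
      (pYc u z * ∑ i, (a i : ℂ) * (starRingEnd ℂ) (pXc u i z)) * ((z.2 ^ c : ℝ) : ℂ) := ⟨_, rfl⟩
  have hs0 : 0 ≤ Real.sqrt (∑ i, a i ^ 2) := Real.sqrt_nonneg _
  obtain ⟨s, hsdef⟩ : ∃ s : ℝ, s = Real.sqrt (∑ i, a i ^ 2) := ⟨_, rfl⟩
  rw [← hsdef] at ha hs0 ⊢
  have h1s : 0 < 1 - s := by linarith
  have hA0 : 0 ≤ A := hAdef ▸ aux_A0
  have hJnorm : ‖J‖ ≤ s / 2 * A := by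
    rw [hJdef, hAdef, hsdef]
    exact aux_J (a := a) hu hgrad
  have haf : aForm N c a u u = (A : ℂ) + 2 * J := by
    rw [aForm, aux_I1, ← hAdef, ← hJdef]
  have hre : (aForm N c a u u).re = A + 2 * J.re := by
    rw [haf]; simp
  have him : (aForm N c a u u).im = 2 * J.im := by
    rw [haf]; simp
  have hJre : |J.re| ≤ s / 2 * A :=
    le_trans (by simpa using Complex.abs_re_le_norm J) hJnorm
  have hJim : |J.im| ≤ s / 2 * A :=
    le_trans (by simpa using Complex.abs_im_le_norm J) hJnorm
  rw [hre, him, div_mul_eq_mul_div, le_div_iff₀ h1s]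
  have h1 : -(s / 2 * A) ≤ J.re := neg_le_of_abs_le hJre
  have habs : |2 * J.im| = 2 * |J.im| := by
    rw [abs_mul, abs_two]
  rw [habs]
  nlinarith [mul_nonneg (by linarith : (0:ℝ) ≤ s / 2 * A - |J.im|) h1s.le,
    mul_nonneg hs0 (by linarith : (0:ℝ) ≤ J.re + s / 2 * A)]
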